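/- Saddle point of the AUC-square min-max objective: with a* = a(S), b* = b(S) and α* = 1 + b(S) − a(S), the triple (a*, b*, α*) is a saddle point of g(a,b,α) := E_μ[F(a,b,α)]; that is, for all a, b, α ∈ ℝ, g(a*, b*, α) ≤ g(a*, b*, α*) ≤ g(a, b, α*), and g(a*, b*, α*) = p(1−p)·A_S. -/

import Mathlib

open MeasureTheory ProbabilityTheory

/-- The AUC-square integrand
`F(a,b,α) = (1−p)(S−a)²·1_A + p(S−b)²·1_{Aᶜ} − p(1−p)α² + 2α(p(1−p) + p·S·1_{Aᶜ} − (1−p)·S·1_A)`. -/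
noncomputable def FSq {Ω : Type*} (A : Set Ω) (p : ℝ) (S : Ω → ℝ)
    (a b α : ℝ) (ω : Ω) : ℝ :=
  (1 - p) * (S ω - a) ^ 2 * A.indicator 1 ω
    + p * (S ω - b) ^ 2 * Aᶜ.indicator 1 ω
    - p * (1 - p) * α ^ 2
    + 2 * α * (p * (1 - p) + p * S ω * Aᶜ.indicator 1 ω
        - (1 - p) * S ω * A.indicator 1 ω)

/-- Saddle point of the AUC-square min-max objective: with `a* = a(S)`, `b* = b(S)` and
`α* = 1 + b(S) − a(S)`, the triple `(a*, b*, α*)` is a saddle point of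
`g(a,b,α) := E_μ[F(a,b,α)]`, i.e. `g(a*,b*,α) ≤ g(a*,b*,α*) ≤ g(a,b,α*)` for all `a,b,α`,
and `g(a*,b*,α*) = p(1−p)·A_S`. -/
theorem saddle_point_AUC_square
    {Ω : Type*} [MeasurableSpace Ω] (μ : Measure Ω) [IsProbabilityMeasure μ]
    (A : Set Ω) (hA : MeasurableSet A)
    (p : ℝ) (hp : p = (μ A).toReal) (hp0 : 0 < p) (hp1 : p < 1)
    (S : Ω → ℝ) (hS : MemLp S 2 μ)
    (aS bS αstar AS : ℝ)
    (haS : aS = ∫ ω, S ω ∂μ[|A]) (hbS : bS = ∫ ω, S ω ∂μ[|Aᶜ])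
    (hαstar : αstar = 1 + bS - aS)
    (hAS : AS = ∫ s, ∫ t, (1 - s + t) ^ 2 ∂(Measure.map S μ[|Aᶜ]) ∂(Measure.map S μ[|A])) :
    (∀ a b α : ℝ,
        (∫ ω, FSq A p S aS bS α ω ∂μ) ≤ (∫ ω, FSq A p S aS bS αstar ω ∂μ) ∧
        (∫ ω, FSq A p S aS bS αstar ω ∂μ) ≤ (∫ ω, FSq A p S a b αstar ω ∂μ)) ∧
    (∫ ω, FSq A p S aS bS αstar ω ∂μ) = p * (1 - p) * AS := by
  have h1p : 0 < 1 - p := by linarith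
  have hAtop : μ A ≠ ⊤ := measure_ne_top μ A
  have hAne : μ A ≠ 0 := by
    intro h; rw [hp, h] at hp0; simp at hp0
  have hAc : MeasurableSet Aᶜ := hA.compl
  have hq : (μ Aᶜ).toReal = 1 - p := by
    rw [measure_compl hA hAtop, measure_univ,
      ENNReal.toReal_sub_of_le (prob_le_one) ENNReal.one_ne_top, ENNReal.toReal_one, hp]
  have hAcne : μ Aᶜ ≠ 0 := by
    intro h; rw [h] at hq; simp at hq; linarith
  haveI hP1 : IsProbabilityMeasure μ[|A] := cond_isProbabilityMeasure hAne
  haveI hP2 : IsProbabilityMeasure μ[|Aᶜ] := cond_isProbabilityMeasure hAcne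
  have hSint : Integrable S μ := hS.integrable one_le_two
  have hS2int : Integrable (fun ω => S ω ^ 2) μ := hS.integrable_sq
  -- integrability w.r.t. conditional measures
  have hcondInt : ∀ (B : Set Ω), μ B ≠ 0 → ∀ f : Ω → ℝ, Integrable f μ → Integrable f μ[|B] := by
    intro B hB f hf
    rw [ProbabilityTheory.cond]
    exact (hf.restrict).smul_measure (ENNReal.inv_ne_top.mpr hB)
  have hcond : ∀ (B : Set Ω) (f : Ω → ℝ),
      ∫ ω, f ω ∂μ[|B] = (μ B).toReal⁻¹ * ∫ ω in B, f ω ∂μ := by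
    intro B f
    rw [ProbabilityTheory.cond, integral_smul_measure, ENNReal.toReal_inv, smul_eq_mul]
  -- polynomial moments
  set M2p := ∫ ω, S ω ^ 2 ∂μ[|A] with hM2p
  set M2m := ∫ ω, S ω ^ 2 ∂μ[|Aᶜ] with hM2m
  have hpoly : ∀ (ν : Measure Ω), IsProbabilityMeasure ν → Integrable S ν →
      Integrable (fun ω => S ω ^ 2) ν → ∀ c d e : ℝ,
      ∫ ω, (c * S ω ^ 2 + d * S ω + e) ∂ν
        = c * (∫ ω, S ω ^ 2 ∂ν) + d * (∫ ω, S ω ∂ν) + e := by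
    intro ν hν h1 h2 c d e
    have hfg : Integrable (fun ω => c * S ω ^ 2 + d * S ω) ν :=
      (h2.const_mul c).add (h1.const_mul d)
    rw [integral_add hfg (integrable_const e),
      integral_add (h2.const_mul c) (h1.const_mul d),
      integral_const_mul, integral_const_mul, integral_const, probReal_univ]
    simp
  have hSp : Integrable S μ[|A] := hcondInt A hAne S hSint
  have hSm : Integrable S μ[|Aᶜ] := hcondInt Aᶜ hAcne S hSint
  have hS2p : Integrable (fun ω => S ω ^ 2) μ[|A] := hcondInt A hAne _ hS2int
  have hS2m : Integrable (fun ω => S ω ^ 2) μ[|Aᶜ] := hcondInt Aᶜ hAcne _ hS2int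
  -- general integrable quadratic form
  have hqint : ∀ c d e : ℝ, Integrable (fun ω => c * S ω ^ 2 + d * S ω + e) μ :=
    fun c d e => ((hS2int.const_mul c).add (hSint.const_mul d)).add (integrable_const e)
  -- conditional integral of a restricted quadratic form
  have hrest : ∀ (B : Set Ω), MeasurableSet B → μ B ≠ 0 → ∀ f : Ω → ℝ, Integrable f μ →
      ∫ ω in B, f ω ∂μ = (μ B).toReal * ∫ ω, f ω ∂μ[|B] := by
    intro B hBm hB f hf
    rw [hcond B f, ← mul_assoc, mul_inv_cancel₀, one_mul]
    exact ENNReal.toReal_ne_zero.mpr ⟨hB, measure_ne_top μ B⟩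
  -- key formula for the objective
  have key : ∀ a b α : ℝ, (∫ ω, FSq A p S a b α ω ∂μ)
      = p * (1 - p) * ((M2p - 2*a*aS + a^2) + (M2m - 2*b*bS + b^2)
          - α^2 + 2*α*(1 + bS - aS)) := by
    intro a b α
    have hsplit : (fun ω => FSq A p S a b α ω)
        = fun ω => A.indicator (fun ω => (1-p) * S ω ^ 2
              + (-2*a*(1-p) - 2*α*(1-p)) * S ω + (1-p)*a^2) ω
          + Aᶜ.indicator (fun ω => p * S ω ^ 2 + (-2*b*p + 2*α*p) * S ω + p*b^2) ω
          + (2*α*p*(1-p) - p*(1-p)*α^2) := by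
      funext ω
      by_cases h : ω ∈ A
      · have h' : ω ∉ Aᶜ := by simpa using h
        simp only [FSq, Set.indicator_of_mem h, Set.indicator_of_notMem h', Pi.one_apply]
        ring
      · have h' : ω ∈ Aᶜ := h
        simp only [FSq, Set.indicator_of_notMem h, Set.indicator_of_mem h', Pi.one_apply]
        ring
    have hi1 : Integrable (fun ω => A.indicator (fun ω => (1-p) * S ω ^ 2
        + (-2*a*(1-p) - 2*α*(1-p)) * S ω + (1-p)*a^2) ω) μ := (hqint _ _ _).indicator hA
    have hi2 : Integrable (fun ω => Aᶜ.indicator (fun ω => p * S ω ^ 2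
        + (-2*b*p + 2*α*p) * S ω + p*b^2) ω) μ := (hqint _ _ _).indicator hAc
    have hi12 : Integrable (fun ω => A.indicator (fun ω => (1-p) * S ω ^ 2
        + (-2*a*(1-p) - 2*α*(1-p)) * S ω + (1-p)*a^2) ω
        + Aᶜ.indicator (fun ω => p * S ω ^ 2 + (-2*b*p + 2*α*p) * S ω + p*b^2) ω) μ :=
      hi1.add hi2
    rw [hsplit,
      integral_add hi12 (integrable_const _),
      integral_add hi1 hi2,
      integral_indicator hA, integral_indicator hAc, integral_const, probReal_univ,
      hrest A hA hAne _ (hqint _ _ _), hrest Aᶜ hAc hAcne _ (hqint _ _ _),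
      hpoly _ hP1 hSp hS2p, hpoly _ hP2 hSm hS2m, ← haS, ← hbS, ← hM2p, ← hM2m, ← hp, hq]
    simp only [one_smul, smul_eq_mul, ENNReal.toReal_one]
    ring
  -- AS formula
  have hSmeas_p : AEMeasurable S μ[|A] :=
    hS.aestronglyMeasurable.aemeasurable.mono_ac cond_absolutelyContinuous
  have hSmeas_m : AEMeasurable S μ[|Aᶜ] :=
    hS.aestronglyMeasurable.aemeasurable.mono_ac cond_absolutelyContinuous
  have hinner : ∀ s : ℝ, ∫ t, (1 - s + t)^2 ∂(Measure.map S μ[|Aᶜ])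
      = (1-s)^2 + 2*(1-s)*bS + M2m := by
    intro s
    rw [integral_map hSmeas_m
      (by fun_prop : Measurable fun t : ℝ => (1 - s + t)^2).aestronglyMeasurable]
    have : (fun ω => (1 - s + S ω)^2)
        = fun ω => 1 * S ω ^ 2 + (2*(1-s)) * S ω + (1-s)^2 := by funext ω; ring
    rw [this, hpoly _ hP2 hSm hS2m, ← hbS, ← hM2m]; ring
  have hASval : AS = M2p + (-2 - 2*bS) * aS + (1 + 2*bS + M2m) := by
    rw [hAS]
    simp_rw [hinner]
    rw [integral_map hSmeas_p
      (by fun_prop : Measurable fun s : ℝ => (1-s)^2 + 2*(1-s)*bS + M2m).aestronglyMeasurable]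
    have : (fun ω => (1 - S ω)^2 + 2*(1 - S ω)*bS + M2m)
        = fun ω => 1 * S ω ^ 2 + (-2 - 2*bS) * S ω + (1 + 2*bS + M2m) := by funext ω; ring
    rw [this, hpoly _ hP1 hSp hS2p, ← haS, ← hM2p]; ring
  constructor
  · intro a b α
    constructor
    · rw [key, key, hαstar]
      have h := mul_pos hp0 h1p
      nlinarith [mul_nonneg h.le (sq_nonneg (α - (1 + bS - aS)))]
    · rw [key, key]
      have h := mul_pos hp0 h1p
      nlinarith [mul_nonneg h.le (sq_nonneg (a - aS)), mul_nonneg h.le (sq_nonneg (b - bS))]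
  · rw [key, hASval, hαstar]; ring
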